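/- arXiv:1810.03578 — 2 statements merged into one kernel-verified Lean document; each statement's English description precedes it below -/
import Mathlib

section
/- Let C ⊆ ℝ^{n+1} be a closed cone with vertex at the origin and p ∈ ℝ^{n+1} with p ∉ C. If for every r ∈ (0, ‖p‖/2) the open ball centered at r·(p/‖p‖) of radius r is disjoint from C, then ⟪x, p⟫ ≤ 0 for every x ∈ C. -/
open Set Metric

theorem stmt1 {n : ℕ} (C : Set (EuclideanSpace ℝ (Fin (n + 1))))
    (hC : IsClosed C)
    (hCone : ∀ x ∈ C, ∀ t : ℝ, 0 ≤ t → t • x ∈ C)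
    (p : EuclideanSpace ℝ (Fin (n + 1))) (hp : p ∉ C)
    (hballs : ∀ r : ℝ, 0 < r → r < ‖p‖ / 2 →
      Metric.ball (r • (‖p‖⁻¹ • p)) r ∩ C = ∅) :
    ∀ x ∈ C, (inner ℝ x p : ℝ) ≤ 0 := by
  intro x hx
  by_contra h
  push_neg at h
  have hp0 : p ≠ 0 := by
    rintro rfl
    simp [inner_zero_right] at h
  have hpn : 0 < ‖p‖ := norm_pos_iff.mpr hp0
  have hx0 : x ≠ 0 := by
    rintro rfl
    simp [inner_zero_left] at h
  have hxn : 0 < ‖x‖ := norm_pos_iff.mpr hx0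
  set r : ℝ := ‖p‖ / 4 with hr
  have hr0 : 0 < r := by positivity
  have hr2 : r < ‖p‖ / 2 := by rw [hr]; linarith
  set a : ℝ := inner ℝ x p with ha
  set t : ℝ := r * a / (‖p‖ * ‖x‖ ^ 2) with ht
  have ht0 : 0 < t := div_pos (mul_pos hr0 h) (mul_pos hpn (pow_pos hxn 2))
  have htx : t • x ∈ C := hCone x hx t ht0.le
  have hball := hballs r hr0 hr2
  have key : t * ‖x‖ ^ 2 = r * a / ‖p‖ := by
    rw [ht]; field_simp
  have hmem : t • x ∈ Metric.ball (r • (‖p‖⁻¹ • p)) r := by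
    rw [mem_ball, dist_eq_norm]
    have hsq : ‖t • x - r • (‖p‖⁻¹ • p)‖ ^ 2 < r ^ 2 := by
      rw [norm_sub_sq_real, real_inner_smul_left, real_inner_smul_right,
        real_inner_smul_right, norm_smul, norm_smul, norm_smul]
      have h1 : |t| = t := abs_of_pos ht0
      have h2 : |r| = r := abs_of_pos hr0
      have h3 : ‖(‖p‖⁻¹ : ℝ)‖ = ‖p‖⁻¹ := by
        simp [abs_of_pos (inv_pos.mpr hpn)]
      rw [Real.norm_eq_abs, Real.norm_eq_abs, h1, h2, h3]
      have h4 : ‖p‖⁻¹ * ‖p‖ = 1 := inv_mul_cancel₀ hpn.ne'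
      have h5 : ‖p‖⁻¹ * a = a / ‖p‖ := by ring
      have ha0 : 0 < a / ‖p‖ := div_pos h hpn
      rw [← ha, h4, h5]
      have hX : 0 < t * (r * (a / ‖p‖)) := mul_pos ht0 (mul_pos hr0 ha0)
      have hEq : (t * ‖x‖) ^ 2 = t * (r * (a / ‖p‖)) := by
        rw [mul_pow, pow_two t, mul_assoc, key]; ring
      linarith [hX, hEq]
    exact lt_of_pow_lt_pow_left₀ 2 hr0.le hsq
  rw [Set.eq_empty_iff_forall_notMem] at hball
  exact hball (t • x) ⟨hmem, htx⟩
end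

section
/- The eigenvalues of the Newton operator P_r of a symmetric endomorphism A are given by S_r(A_i), where A_i denotes the (n-1)-tuple of eigenvalues of A with k_i omitted: if A e_i = k_i e_i, then P_r e_i = S_r(k_1, …, k̂_i, …, k_n) e_i. -/
open Finset

/-- The `r`-th elementary symmetric polynomial of `k 1, …, k n`. -/
noncomputable def esymm {n : ℕ} (k : Fin n → ℝ) (r : ℕ) : ℝ :=
  ∑ s ∈ Finset.univ.powersetCard r, ∏ i ∈ s, k i

/-- The Newton operators of an endomorphism `A`, relative to a sequence `S` of scalars:
`P 0 = id`, `P (r+1) = S (r+1) • id - A ∘ P r`. -/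
noncomputable def newtonOp {E : Type*} [AddCommGroup E] [Module ℝ E]
    (A : E →ₗ[ℝ] E) (S : ℕ → ℝ) : ℕ → (E →ₗ[ℝ] E)
  | 0 => LinearMap.id
  | r + 1 => S (r + 1) • LinearMap.id - A ∘ₗ newtonOp A S r

/-- The `r`-th elementary symmetric polynomial of `k` restricted to a finite index set `s`. -/
noncomputable def esymmOn {n : ℕ} (s : Finset (Fin n)) (k : Fin n → ℝ) (r : ℕ) : ℝ :=
  ∑ t ∈ s.powersetCard r, ∏ i ∈ t, k i

lemma esymm_split {n : ℕ} (k : Fin n → ℝ) (r : ℕ) (i : Fin n) :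
    esymm k (r + 1) = esymmOn (Finset.univ.erase i) k (r + 1)
      + k i * esymmOn (Finset.univ.erase i) k r := by
  have hi : i ∉ Finset.univ.erase i := Finset.notMem_erase _ _
  have huniv : insert i (Finset.univ.erase i) = (Finset.univ : Finset (Fin n)) := by
    simp [Finset.insert_erase (Finset.mem_univ i)]
  unfold esymm esymmOn
  conv_lhs => rw [← huniv]
  rw [Finset.powersetCard_succ_insert hi, Finset.sum_union]
  · congr 1
    rw [Finset.sum_image, Finset.mul_sum]
    · refine Finset.sum_congr rfl fun t ht => ?_
      rw [Finset.prod_insert]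
      exact fun h => hi ((Finset.mem_powersetCard.1 ht).1 h)
    · intro t ht u hu htu
      have ht' : i ∉ t := fun h => hi ((Finset.mem_powersetCard.1 ht).1 h)
      have hu' : i ∉ u := fun h => hi ((Finset.mem_powersetCard.1 hu).1 h)
      ext a
      constructor <;> intro ha
      · have : a ∈ insert i u := htu ▸ Finset.mem_insert_of_mem ha
        rcases Finset.mem_insert.1 this with h | h
        · exact absurd (h ▸ ha) ht'
        · exact h
      · have : a ∈ insert i t := htu.symm ▸ Finset.mem_insert_of_mem ha
        rcases Finset.mem_insert.1 this with h | h
        · exact absurd (h ▸ ha) hu'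
        · exact h
  · rw [Finset.disjoint_left]
    intro t ht ht'
    have h1 : i ∉ t := fun h => hi ((Finset.mem_powersetCard.1 ht).1 h)
    obtain ⟨u, hu, rfl⟩ := Finset.mem_image.1 ht'
    exact h1 (Finset.mem_insert_self _ _)

/-- The eigenvalues of the Newton operator `P r` are the elementary symmetric functions of the
eigenvalues of `A` with one eigenvalue omitted. -/
theorem stmt19 {n : ℕ} (A : EuclideanSpace ℝ (Fin n) →ₗ[ℝ] EuclideanSpace ℝ (Fin n))
    (hA : LinearMap.IsSymmetric A)
    (b : OrthonormalBasis (Fin n) ℝ (EuclideanSpace ℝ (Fin n)))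
    (k : Fin n → ℝ) (hb : ∀ i, A (b i) = k i • b i) (r : ℕ) (i : Fin n) :
    newtonOp A (esymm k) r (b i) = esymmOn (Finset.univ.erase i) k r • b i := by
  induction r with
  | zero => simp [newtonOp, esymmOn]
  | succ r ih =>
    simp only [newtonOp, LinearMap.sub_apply, LinearMap.smul_apply, LinearMap.id_apply,
      LinearMap.comp_apply, ih, map_smul, hb i, esymm_split k r i, smul_smul, ← sub_smul]
    ring_nf
end
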